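/- For every real $r\ge1$ and $s\in[0,1]$, with $L_r(s)$ denoting the normalized gap containing $s$ of the fractional parts of $\{\sqrt1,\dots,\sqrt{\lfloor r\rfloor}\}$, one has $\frac{\lfloor r\rfloor}{(\lfloor\sqrt r\rfloor+1)^2} L_{(\lfloor\sqrt r\rfloor+1)^2}(s) \le L_r(s) \le \frac{\lfloor r\rfloor}{\lfloor\sqrt r\rfloor^2} L_{\lfloor\sqrt r\rfloor^2}(s)$. -/

import Mathlib

open Set

/-- The set of fractional parts of `√1, √2, …, √m`. -/
def sqrtFracs (m : ℕ) : Set ℝ :=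
  (fun n : ℕ => Int.fract (Real.sqrt n)) '' (Set.Icc 1 m)

/-- The left endpoint of the gap of `sqrtFracs m` containing `s`, i.e. the largest
fractional part `≤ s`. -/
noncomputable def gapLower (m : ℕ) (s : ℝ) : ℝ :=
  sSup {x ∈ sqrtFracs m | x ≤ s}

/-- The right endpoint of the gap of `sqrtFracs m` containing `s`, i.e. the smallest
fractional part `> s`, or `1` if there is none (the convention `t_{⌊r⌋+1} = 1`). -/
noncomputable def gapUpper (m : ℕ) (s : ℝ) : ℝ :=
  sInf ({x ∈ sqrtFracs m | s < x} ∪ {1})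

/-- `L r s`: the normalized length of the gap containing `s` of the fractional parts of
`√1, …, √⌊r⌋`. -/
noncomputable def Lgap (r : ℝ) (s : ℝ) : ℝ :=
  (Nat.floor r : ℝ) * (gapUpper (Nat.floor r) s - gapLower (Nat.floor r) s)

lemma zero_mem_sqrtFracs {m : ℕ} (hm : 1 ≤ m) : (0 : ℝ) ∈ sqrtFracs m :=
  ⟨1, ⟨le_refl 1, hm⟩, by norm_num⟩

lemma sqrtFracs_mono {m₁ m₂ : ℕ} (h : m₁ ≤ m₂) : sqrtFracs m₁ ⊆ sqrtFracs m₂ :=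
  Set.image_mono (Set.Icc_subset_Icc_right h)

lemma gapLower_mono {m₁ m₂ : ℕ} (hm : 1 ≤ m₁) (h : m₁ ≤ m₂) {s : ℝ} (hs : 0 ≤ s) :
    gapLower m₁ s ≤ gapLower m₂ s := by
  apply csSup_le_csSup
  · exact ⟨s, fun x hx => hx.2⟩
  · exact ⟨0, zero_mem_sqrtFracs hm, hs⟩
  · exact fun x hx => ⟨sqrtFracs_mono h hx.1, hx.2⟩

lemma gapUpper_anti {m₁ m₂ : ℕ} (h : m₁ ≤ m₂) (s : ℝ) :
    gapUpper m₂ s ≤ gapUpper m₁ s := by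
  apply csInf_le_csInf
  · refine ⟨0, fun x hx => ?_⟩
    rcases hx with hx | hx
    · rcases hx.1 with ⟨n, _, rfl⟩
      exact Int.fract_nonneg _
    · simp only [Set.mem_singleton_iff] at hx; simp [hx]
  · exact ⟨1, Or.inr rfl⟩
  · exact Set.union_subset_union_left _ (fun x hx => ⟨sqrtFracs_mono h hx.1, hx.2⟩)

lemma gapDiff_anti {m₁ m₂ : ℕ} (hm : 1 ≤ m₁) (h : m₁ ≤ m₂) {s : ℝ} (hs : 0 ≤ s) :
    gapUpper m₂ s - gapLower m₂ s ≤ gapUpper m₁ s - gapLower m₁ s :=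
  sub_le_sub (gapUpper_anti h s) (gapLower_mono hm h hs)

theorem stmt_9 (r : ℝ) (hr : 1 ≤ r) (s : ℝ) (hs : s ∈ Set.Icc (0 : ℝ) 1) :
    ((Nat.floor r : ℝ) / ((Nat.floor (Real.sqrt r) : ℝ) + 1) ^ 2) *
        Lgap (((Nat.floor (Real.sqrt r) + 1 : ℕ) ^ 2 : ℕ) : ℝ) s ≤ Lgap r s ∧
      Lgap r s ≤ ((Nat.floor r : ℝ) / (Nat.floor (Real.sqrt r) : ℝ) ^ 2) *
        Lgap (((Nat.floor (Real.sqrt r) : ℕ) ^ 2 : ℕ) : ℝ) s := by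
  set a := Nat.floor (Real.sqrt r) with ha
  set m := Nat.floor r with hm
  obtain ⟨hs0, hs1⟩ := hs
  have hr0 : (0:ℝ) ≤ r := by linarith
  have ha1 : 1 ≤ a := Nat.le_floor (by
    rw [show ((1:ℕ):ℝ) = Real.sqrt 1 by simp]
    exact Real.sqrt_le_sqrt hr)
  have hm1 : 1 ≤ m := Nat.le_floor (by exact_mod_cast hr)
  have hlow : a ^ 2 ≤ m := by
    have h1 : (a : ℝ) ≤ Real.sqrt r := Nat.floor_le (Real.sqrt_nonneg r)
    have h2 : ((a ^ 2 : ℕ) : ℝ) ≤ r := by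
      push_cast
      calc ((a:ℝ))^2 ≤ (Real.sqrt r)^2 :=
            pow_le_pow_left₀ (by positivity) h1 2
        _ = r := Real.sq_sqrt hr0
    exact Nat.le_floor h2
  have hhigh : m ≤ (a + 1) ^ 2 := by
    have h1 : Real.sqrt r < (a : ℝ) + 1 := Nat.lt_floor_add_one _
    have h2 : r < (((a + 1) ^ 2 : ℕ) : ℝ) := by
      push_cast
      calc r = (Real.sqrt r)^2 := (Real.sq_sqrt hr0).symm
        _ < ((a:ℝ) + 1)^2 := by
            apply pow_lt_pow_left₀ h1 (Real.sqrt_nonneg r)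
            norm_num
    exact le_of_lt (by exact_mod_cast (Nat.floor_lt hr0).mpr h2)
  have hD2 : gapUpper ((a+1)^2) s - gapLower ((a+1)^2) s ≤ gapUpper m s - gapLower m s :=
    gapDiff_anti hm1 hhigh hs0
  have hD1 : gapUpper m s - gapLower m s ≤ gapUpper (a^2) s - gapLower (a^2) s :=
    gapDiff_anti (Nat.one_le_pow _ _ ha1) hlow hs0
  have hm0 : (0:ℝ) ≤ (m:ℝ) := Nat.cast_nonneg m
  have hc1 : (((a+1)^2 : ℕ) : ℝ) = ((a:ℝ)+1)^2 := by push_cast; ring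
  have hc2 : ((a^2 : ℕ) : ℝ) = ((a:ℝ))^2 := by push_cast; ring
  have ha0 : (0:ℝ) < (a:ℝ) := by exact_mod_cast ha1
  constructor
  · have : ((m:ℝ) / ((a:ℝ)+1)^2) * Lgap ((((a+1:ℕ))^2 : ℕ) : ℝ) s
        = (m:ℝ) * (gapUpper ((a+1)^2) s - gapLower ((a+1)^2) s) := by
      rw [Lgap, Nat.floor_natCast, hc1]
      field_simp
    rw [this, Lgap, ← hm]
    exact mul_le_mul_of_nonneg_left hD2 hm0
  · have : ((m:ℝ) / ((a:ℝ))^2) * Lgap (((a:ℕ)^2 : ℕ) : ℝ) s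
        = (m:ℝ) * (gapUpper (a^2) s - gapLower (a^2) s) := by
      rw [Lgap, Nat.floor_natCast, hc2]
      field_simp
    rw [this, Lgap, ← hm]
    exact mul_le_mul_of_nonneg_left hD1 hm0
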